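/- arXiv:1912.12873 — 3 statements merged into one kernel-verified Lean document; each statement's English description precedes it below -/
import Mathlib

section
/- Let G be a finite two-player zero-sum game with perfect information given by a finite game tree, and let f be a (behavioral) mixed-strategy subgame-perfect equilibrium. Then any pure strategy profile g such that, at every internal node h, the action g(h) lies in the support of the mixed action f(h), is itself a pure-strategy subgame-perfect equilibrium, and it yields the same payoff as f at every node. -/
set_option linter.unusedVariables false

/-- A finite game tree with `n` players: each internal node is controlled by a
player in `Fin n` and has `k+1` children; leaves carry a payoff vector. -/
inductive GameTree (n : ℕ) : Type
  | leaf (u : Fin n → ℝ) : GameTree n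
  | node (p : Fin n) (k : ℕ) (c : Fin (k + 1) → GameTree n) : GameTree n

/-- A pure strategy profile: a choice of child at every internal node. -/
inductive PureProfile {n : ℕ} : GameTree n → Type
  | leaf {u : Fin n → ℝ} : PureProfile (.leaf u)
  | node {p : Fin n} {k : ℕ} {c : Fin (k + 1) → GameTree n}
      (ch : Fin (k + 1)) (sub : ∀ j, PureProfile (c j)) :
      PureProfile (.node p k c)

/-- The payoff vector induced by a pure strategy profile. -/
def payoff {n : ℕ} : {t : GameTree n} → PureProfile t → Fin n → ℝ
  | .leaf u, .leaf, i => u i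
  | .node _ _ _, .node ch sub, i => payoff (sub ch) i

/-- `Dev i g g'` : `g'` is a unilateral deviation of `g` by player `i`
(they agree at every node not controlled by `i`). -/
def Dev {n : ℕ} (i : Fin n) : {t : GameTree n} → PureProfile t → PureProfile t → Prop
  | .leaf _, _, _ => True
  | .node p _ _, .node ch sub, .node ch' sub' =>
      (p ≠ i → ch' = ch) ∧ ∀ j, Dev i (sub j) (sub' j)

/-- Subgame-perfect equilibrium for pure profiles: at every node, no player can
strictly improve her payoff in the subgame rooted there by a unilateral deviation. -/
def IsSPE {n : ℕ} : {t : GameTree n} → PureProfile t → Prop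
  | .leaf _, _ => True
  | .node p k c, .node ch sub =>
      (∀ j, IsSPE (sub j)) ∧
      ∀ (i : Fin n) (g' : PureProfile (.node p k c)),
        Dev i (.node ch sub) g' →
        payoff g' i ≤ payoff (PureProfile.node (p := p) ch sub) i

/-- A behavioral mixed strategy profile: a probability distribution over
children at every internal node. -/
inductive MixedProfile {n : ℕ} : GameTree n → Type
  | leaf {u : Fin n → ℝ} : MixedProfile (.leaf u)
  | node {p : Fin n} {k : ℕ} {c : Fin (k + 1) → GameTree n}
      (w : Fin (k + 1) → ℝ) (hw : ∀ j, 0 ≤ w j) (hsum : ∑ j, w j = 1)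
      (sub : ∀ j, MixedProfile (c j)) :
      MixedProfile (.node p k c)

/-- Expected payoff vector of a behavioral mixed strategy profile. -/
noncomputable def mpayoff {n : ℕ} : {t : GameTree n} → MixedProfile t → Fin n → ℝ
  | .leaf u, .leaf, i => u i
  | .node _ _ _, .node w _ _ sub, i => ∑ j, w j * mpayoff (sub j) i

/-- `MDev i f f'` : `f'` is a unilateral deviation of the mixed profile `f` by player `i`. -/
def MDev {n : ℕ} (i : Fin n) : {t : GameTree n} → MixedProfile t → MixedProfile t → Prop
  | .leaf _, _, _ => True
  | .node p _ _, .node w _ _ sub, .node w' _ _ sub' =>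
      (p ≠ i → w' = w) ∧ ∀ j, MDev i (sub j) (sub' j)

/-- Subgame-perfect equilibrium for behavioral mixed profiles. -/
noncomputable def MixedSPE {n : ℕ} : {t : GameTree n} → MixedProfile t → Prop
  | .leaf _, _ => True
  | .node p k c, .node w hw hs sub =>
      (∀ j, MixedSPE (sub j)) ∧
      ∀ (i : Fin n) (f' : MixedProfile (.node p k c)),
        MDev i (MixedProfile.node (p := p) w hw hs sub) f' →
        mpayoff f' i ≤ mpayoff (MixedProfile.node (p := p) w hw hs sub) i

/-- `InSupport f g` : at every internal node, the pure profile `g` selects an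
action lying in the support of the mixed action of `f` at that node. -/
def InSupport {n : ℕ} : {t : GameTree n} → MixedProfile t → PureProfile t → Prop
  | .leaf _, _, _ => True
  | .node _ _ _, .node w _ _ msub, .node ch psub =>
      0 < w ch ∧ ∀ j, InSupport (msub j) (psub j)

/-- The payoffs of leaves of the game tree. -/
def IsLeafPayoff {n : ℕ} : GameTree n → (Fin n → ℝ) → Prop
  | .leaf u, v => u = v
  | .node _ _ c, v => ∃ j, IsLeafPayoff (c j) v

/-- Zero-sum condition for two-player games: at every leaf the two payoffs sum to zero. -/
def ZeroSum (t : GameTree 2) : Prop :=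
  ∀ v, IsLeafPayoff t v → v 0 + v 1 = 0

/-- `PayoffAgree f g` : at every node of the tree, the pure profile `g`
yields the same payoff vector as the mixed profile `f`. -/
def PayoffAgree {n : ℕ} : {t : GameTree n} → MixedProfile t → PureProfile t → Prop
  | .leaf _, _, _ => True
  | .node p k c, .node w hw hs msub, .node ch psub =>
      (∀ i, payoff (PureProfile.node (p := p) ch psub) i
          = mpayoff (MixedProfile.node (p := p) w hw hs msub) i) ∧
      ∀ j, PayoffAgree (msub j) (psub j)


lemma zerosum_child {p : Fin 2} {k : ℕ} {c : Fin (k+1) → GameTree 2}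
    (hz : ZeroSum (.node p k c)) (j : Fin (k+1)) : ZeroSum (c j) :=
  fun v hv => hz v ⟨j, hv⟩

lemma mpayoff_zero_sum : ∀ {t : GameTree 2} (f : MixedProfile t), ZeroSum t →
    mpayoff f 0 + mpayoff f 1 = 0
  | .leaf u, .leaf, hz => hz u rfl
  | .node p k c, .node w hw hs sub, hz => by
      simp only [mpayoff]
      rw [← Finset.sum_add_distrib]
      have h : ∀ j ∈ Finset.univ, w j * mpayoff (sub j) 0 + w j * mpayoff (sub j) 1 = (0:ℝ) := by
        intro j _
        rw [← mul_add, mpayoff_zero_sum (sub j) (zerosum_child hz j), mul_zero]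
      rw [Finset.sum_congr rfl h, Finset.sum_const_zero]

lemma spe_dev {n : ℕ} {i : Fin n} : ∀ {t : GameTree n} {g g' : PureProfile t},
    IsSPE g → Dev i g g' → payoff g' i ≤ payoff g i
  | .leaf u, .leaf, .leaf, _, _ => le_refl _
  | .node p k c, .node ch sub, g', h, hd => h.2 i g' hd

lemma mdev_refl {n : ℕ} (i : Fin n) : ∀ {t : GameTree n} (f : MixedProfile t), MDev i f f
  | .leaf _, .leaf => trivial
  | .node p k c, .node w hw hs sub => ⟨fun _ => rfl, fun j => mdev_refl i (sub j)⟩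

lemma agree_root {n : ℕ} : ∀ {t : GameTree n} {f : MixedProfile t} {g : PureProfile t},
    PayoffAgree f g → ∀ i, payoff g i = mpayoff f i
  | .leaf u, .leaf, .leaf, _, i => rfl
  | .node p k c, .node w hw hs msub, .node ch psub, h, i => h.1 i

lemma main_aux : ∀ {t : GameTree 2} (hz : ZeroSum t) (f : MixedProfile t) (hf : MixedSPE f)
    (g : PureProfile t) (hg : InSupport f g), IsSPE g ∧ PayoffAgree f g
  | .leaf u, hz, .leaf, hf, .leaf, hg => ⟨trivial, trivial⟩
  | .node p k c, hz, .node w hw hs msub, hf, .node ch psub, hg => by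
    obtain ⟨hf1, hf2⟩ := hf
    obtain ⟨hch, hg2⟩ := hg
    have IH : ∀ j, IsSPE (psub j) ∧ PayoffAgree (msub j) (psub j) :=
      fun j => main_aux (zerosum_child hz j) (msub j) (hf1 j) (psub j) (hg2 j)
    -- value of node for controller p
    set V : Fin 2 → ℝ := mpayoff (MixedProfile.node (p := p) w hw hs msub) with hV
    -- pure deviation to child j is an MDev by p
    have hle : ∀ j, mpayoff (msub j) p ≤ V p := by
      intro j
      have hw' : ∀ j', (0:ℝ) ≤ if j' = j then 1 else 0 := by
        intro j'; split <;> norm_num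
      have hs' : ∑ j', (if j' = j then (1:ℝ) else 0) = 1 := by simp
      have hdev : MDev p (MixedProfile.node (p := p) w hw hs msub)
          (MixedProfile.node (p := p) (fun j' => if j' = j then 1 else 0) hw' hs' msub) :=
        ⟨fun h => absurd rfl h, fun j' => mdev_refl p (msub j')⟩
      have := hf2 p _ hdev
      simpa [mpayoff] using this
    have hVsum : V p = ∑ j, w j * mpayoff (msub j) p := by
      simp [hV, mpayoff]
    have hch_eq : mpayoff (msub ch) p = V p := by
      by_contra hne
      have hlt : mpayoff (msub ch) p < V p := lt_of_le_of_ne (hle ch) hne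
      have hstrict : ∑ j, w j * mpayoff (msub j) p < ∑ j, w j * V p :=
        Finset.sum_lt_sum
          (fun j _ => mul_le_mul_of_nonneg_left (hle j) (hw j))
          ⟨ch, Finset.mem_univ ch, mul_lt_mul_of_pos_left hlt hch⟩
      rw [← Finset.sum_mul, hs, one_mul, ← hVsum] at hstrict
      exact lt_irrefl _ hstrict
    -- zero-sum gives equality for the other player too
    have hzs_node : V 0 + V 1 = 0 :=
      mpayoff_zero_sum (MixedProfile.node (p := p) w hw hs msub) hz
    have hzs_ch : mpayoff (msub ch) 0 + mpayoff (msub ch) 1 = 0 :=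
      mpayoff_zero_sum (msub ch) (zerosum_child hz ch)
    have hch_all : ∀ i, mpayoff (msub ch) i = V i := by
      intro i
      rcases (by omega : p = i ∨ p ≠ i) with h | h
      · subst h; exact hch_eq
      · have hcase : (i = 0 ∧ p = 1) ∨ (i = 1 ∧ p = 0) := by omega
        rcases hcase with ⟨hi, hp⟩ | ⟨hi, hp⟩ <;> subst hi <;> subst hp <;> linarith
    have hagree_root : ∀ i, payoff (PureProfile.node (p := p) ch psub) i = V i := by
      intro i
      show payoff (psub ch) i = V i
      rw [agree_root (IH ch).2 i, hch_all i]
    refine ⟨⟨fun j => (IH j).1, ?_⟩, hagree_root, fun j => (IH j).2⟩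
    intro i g' hd
    cases g' with
    | node ch' sub' =>
      obtain ⟨hd1, hd2⟩ := hd
      show payoff (sub' ch') i ≤ payoff (PureProfile.node (p := p) ch psub) i
      have h1 : payoff (sub' ch') i ≤ payoff (psub ch') i :=
        spe_dev (IH ch').1 (hd2 ch')
      rcases (by omega : p = i ∨ p ≠ i) with h | h
      · subst h
        have h2 : payoff (psub ch') p = mpayoff (msub ch') p := agree_root (IH ch').2 p
        calc payoff (sub' ch') p ≤ payoff (psub ch') p := h1
          _ = mpayoff (msub ch') p := h2
          _ ≤ V p := hle ch'
          _ = payoff (PureProfile.node (p := p) ch psub) p := (hagree_root p).symm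
      · rw [hd1 h] at h1 ⊢
        exact h1

theorem stmt2 (t : GameTree 2) (hz : ZeroSum t)
    (f : MixedProfile t) (hf : MixedSPE f)
    (g : PureProfile t) (hg : InSupport f g) :
    IsSPE g ∧ PayoffAgree f g := main_aux hz f hf g hg
end

section
/- Let G be a finite perfect-information game with n players (finite game tree, no chance moves) satisfying the no-indifference condition: whenever two leaves give the same payoff to some player, they give the same payoff to every player. If f is a behavioral mixed-strategy subgame-perfect equilibrium, then every pure strategy profile g selecting at each node an action in the support of f at that node is a pure-strategy subgame-perfect equilibrium. -/
set_option linter.unusedVariables false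

/-- No-indifference condition: if two leaves give the same payoff to some
player, they give the same payoff to every player. -/
def NoIndifference {n : ℕ} (t : GameTree n) : Prop :=
  ∀ u v, IsLeafPayoff t u → IsLeafPayoff t v → (∃ i, u i = v i) → u = v


section Aux

lemma MDev_refl {n : ℕ} (i : Fin n) : {t : GameTree n} → (f : MixedProfile t) → MDev i f f
  | .leaf _, .leaf => trivial
  | .node _ _ _, .node w hw hs sub => ⟨fun _ => rfl, fun j => MDev_refl i (sub j)⟩

lemma payoff_isLeafPayoff {n : ℕ} : {t : GameTree n} → (g : PureProfile t) →
    IsLeafPayoff t (payoff g)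
  | .leaf u, .leaf => rfl
  | .node _ _ _, .node ch sub => ⟨ch, payoff_isLeafPayoff (sub ch)⟩

lemma noIndiff_child {n : ℕ} {p : Fin n} {k : ℕ} {c : Fin (k+1) → GameTree n}
    (h : NoIndifference (.node p k c)) (j : Fin (k+1)) : NoIndifference (c j) :=
  fun u v hu hv he => h u v ⟨j, hu⟩ ⟨j, hv⟩ he

/-- Dirac deviation bound: each child's value for the controlling player is at most
the node value. -/
lemma dirac_le {n : ℕ} {p : Fin n} {k : ℕ} {c : Fin (k+1) → GameTree n}
    (w : Fin (k+1) → ℝ) (hw : ∀ j, 0 ≤ w j) (hs : ∑ j, w j = 1)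
    (msub : ∀ j, MixedProfile (c j))
    (hdev : ∀ (i : Fin n) (f' : MixedProfile (.node p k c)),
        MDev i (MixedProfile.node (p := p) w hw hs msub) f' →
        mpayoff f' i ≤ mpayoff (MixedProfile.node (p := p) w hw hs msub) i)
    (j : Fin (k+1)) :
    mpayoff (msub j) p ≤ mpayoff (MixedProfile.node (p := p) w hw hs msub) p := by
  have hw' : ∀ j', (0:ℝ) ≤ if j' = j then 1 else 0 := by
    intro j'; split <;> norm_num
  have hs' : ∑ j', (if j' = j then (1:ℝ) else 0) = 1 := by simp
  have h := hdev p (MixedProfile.node (p := p) (fun j' => if j' = j then 1 else 0) hw' hs' msub)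
    ⟨fun hne => absurd rfl hne, fun j' => MDev_refl p (msub j')⟩
  have : mpayoff (MixedProfile.node (p := p) (fun j' => if j' = j then 1 else 0) hw' hs' msub) p
      = mpayoff (msub j) p := by
    show (∑ j', (if j' = j then (1:ℝ) else 0) * mpayoff (msub j') p) = _
    rw [Finset.sum_eq_single j]
    · simp
    · intro b _ hb; simp [hb]
    · simp
  rwa [this] at h

/-- On the support, children's values for the controlling player equal the node value. -/
lemma support_eq {n : ℕ} {p : Fin n} {k : ℕ} {c : Fin (k+1) → GameTree n}
    (w : Fin (k+1) → ℝ) (hw : ∀ j, 0 ≤ w j) (hs : ∑ j, w j = 1)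
    (msub : ∀ j, MixedProfile (c j))
    (hdev : ∀ (i : Fin n) (f' : MixedProfile (.node p k c)),
        MDev i (MixedProfile.node (p := p) w hw hs msub) f' →
        mpayoff f' i ≤ mpayoff (MixedProfile.node (p := p) w hw hs msub) i)
    (j : Fin (k+1)) (hj : 0 < w j) :
    mpayoff (msub j) p = mpayoff (MixedProfile.node (p := p) w hw hs msub) p := by
  set V := mpayoff (MixedProfile.node (p := p) w hw hs msub) p with hV
  have hsum0 : ∑ j', w j' * (V - mpayoff (msub j') p) = 0 := by
    have : (∑ j', w j' * mpayoff (msub j') p) = V := rfl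
    rw [Finset.sum_congr rfl (fun j' _ => mul_sub (w j') V (mpayoff (msub j') p)),
      Finset.sum_sub_distrib, this, ← Finset.sum_mul, hs, one_mul, sub_self]
  have hnn : ∀ j' ∈ Finset.univ, (0:ℝ) ≤ w j' * (V - mpayoff (msub j') p) := by
    intro j' _
    exact mul_nonneg (hw j') (sub_nonneg.mpr (dirac_le w hw hs msub hdev j'))
  have := (Finset.sum_eq_zero_iff_of_nonneg hnn).mp hsum0 j (Finset.mem_univ j)
  rcases mul_eq_zero.mp this with h | h
  · exact absurd h (ne_of_gt hj)
  · linarith [sub_eq_zero.mp h]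

/-- Key lemma: an in-support pure profile achieves exactly the mixed payoff vector. -/
lemma payoff_eq_mpayoff {n : ℕ} : {t : GameTree n} → NoIndifference t →
    (f : MixedProfile t) → MixedSPE f → (g : PureProfile t) → InSupport f g →
    payoff g = mpayoff f
  | .leaf u, _, .leaf, _, .leaf, _ => rfl
  | .node p k c, hni, .node w hw hs msub, hf, .node ch psub, hg => by
    obtain ⟨hpos, hsup⟩ := hg
    obtain ⟨hsub, hdev⟩ := hf
    have ihj : ∀ j, payoff (psub j) = mpayoff (msub j) := fun j =>
      payoff_eq_mpayoff (noIndiff_child hni j) (msub j) (hsub j) (psub j) (hsup j)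
    have hvec : ∀ j, 0 < w j → mpayoff (msub j) = mpayoff (msub ch) := by
      intro j hj
      have h1 := ihj j
      have h2 := ihj ch
      have heq : payoff (psub j) = payoff (psub ch) := by
        refine hni _ _ ⟨j, payoff_isLeafPayoff _⟩ ⟨ch, payoff_isLeafPayoff _⟩ ⟨p, ?_⟩
        rw [h1, h2, support_eq w hw hs msub hdev j hj, support_eq w hw hs msub hdev ch hpos]
      rw [← h1, ← h2, heq]
    have hnode : mpayoff (MixedProfile.node (p := p) w hw hs msub) = mpayoff (msub ch) := by
      funext i
      show (∑ j, w j * mpayoff (msub j) i) = _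
      have : ∀ j ∈ Finset.univ, w j * mpayoff (msub j) i = w j * mpayoff (msub ch) i := by
        intro j _
        rcases eq_or_lt_of_le (hw j) with h | h
        · rw [← h, zero_mul, zero_mul]
        · rw [hvec j h]
      rw [Finset.sum_congr rfl this, ← Finset.sum_mul, hs, one_mul]
    have : payoff (PureProfile.node (p := p) ch psub) = payoff (psub ch) := rfl
    rw [this, ihj ch, hnode]

/-- Any unilateral pure deviation from an in-support profile is weakly unprofitable. -/
lemma dev_le_payoff {n : ℕ} : {t : GameTree n} → NoIndifference t →
    (f : MixedProfile t) → MixedSPE f → (g : PureProfile t) → InSupport f g →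
    ∀ (i : Fin n) (g' : PureProfile t), Dev i g g' → payoff g' i ≤ payoff g i
  | .leaf u, _, _, _, .leaf, _, i, .leaf, _ => le_refl _
  | .node p k c, hni, .node w hw hs msub, hf, .node ch psub, hg, i, .node ch' psub', hd => by
    have hf0 := hf
    have hg0 := hg
    obtain ⟨hpos, hsup⟩ := hg
    obtain ⟨hsubSPE, hdev⟩ := hf
    obtain ⟨hch', hsubdev⟩ := hd
    have hle : payoff (psub' ch') i ≤ payoff (psub ch') i :=
      dev_le_payoff (noIndiff_child hni ch') (msub ch') (hsubSPE ch') (psub ch') (hsup ch')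
        i (psub' ch') (hsubdev ch')
    show payoff (psub' ch') i ≤ payoff (psub ch) i
    by_cases hpi : p = i
    · subst hpi
      have hA : payoff (PureProfile.node (p := p) ch psub)
          = mpayoff (MixedProfile.node (p := p) w hw hs msub) :=
        payoff_eq_mpayoff hni _ hf0 _ hg0
      have hA' : payoff (psub ch') = mpayoff (msub ch') :=
        payoff_eq_mpayoff (noIndiff_child hni ch') (msub ch') (hsubSPE ch') (psub ch') (hsup ch')
      have hd2 : mpayoff (msub ch') p ≤ mpayoff (MixedProfile.node (p := p) w hw hs msub) p :=
        dirac_le w hw hs msub hdev ch'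
      have : payoff (PureProfile.node (p := p) ch psub) p = payoff (psub ch) p := rfl
      calc payoff (psub' ch') p ≤ payoff (psub ch') p := hle
        _ = mpayoff (msub ch') p := by rw [hA']
        _ ≤ mpayoff (MixedProfile.node (p := p) w hw hs msub) p := hd2
        _ = payoff (psub ch) p := (congrFun hA p).symm
    · rw [hch' hpi] at hle ⊢
      exact hle

end Aux

theorem stmt3 {n : ℕ} (t : GameTree n) (hni : NoIndifference t)
    (f : MixedProfile t) (hf : MixedSPE f)
    (g : PureProfile t) (hg : InSupport f g) :
    IsSPE g := by
  induction t with
  | leaf u => cases g; trivial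
  | node p k c ih =>
    cases f with | node w hw hs msub => ?_
    cases g with | node ch psub => ?_
    have hf0 := hf
    have hg0 := hg
    obtain ⟨hpos, hsup⟩ := hg
    obtain ⟨hsubSPE, hdev⟩ := hf
    exact ⟨fun j => ih j (noIndiff_child hni j) (msub j) (hsubSPE j) (psub j) (hsup j),
      fun i g' hd => dev_le_payoff hni (.node w hw hs msub) hf0
        (.node ch psub) hg0 i g' hd⟩
end

section
/- In a finite perfect-information game (finitely many players, finite game tree), a pure strategy profile g is a subgame-perfect equilibrium if and only if it admits no profitable one-stage deviation: for every internal node h controlled by player i and every alternative child a of h, player i's payoff from following g starting at h is at least her payoff from choosing a at h and then following g. -/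
set_option linter.unusedVariables false

/-- One-stage-deviation property of a pure profile: at every internal node,
the mover's payoff from her prescribed choice is at least her payoff from
choosing any other child and then following the profile. -/
def OneStage {n : ℕ} : {t : GameTree n} → PureProfile t → Prop
  | .leaf _, _ => True
  | .node p _ _, .node ch sub =>
      (∀ a, payoff (sub a) p ≤ payoff (sub ch) p) ∧ ∀ j, OneStage (sub j)

lemma Dev_refl {n : ℕ} (i : Fin n) : ∀ {t : GameTree n} (g : PureProfile t), Dev i g g
  | .leaf _, .leaf => trivial
  | .node p k c, .node ch sub => ⟨fun _ => rfl, fun j => Dev_refl i (sub j)⟩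

lemma payoff_dev_le {n : ℕ} (i : Fin n) :
    ∀ {t : GameTree n} (g g' : PureProfile t),
      OneStage g → Dev i g g' → payoff g' i ≤ payoff g i
  | .leaf _, .leaf, .leaf, _, _ => le_refl _
  | .node p k c, .node ch sub, .node ch' sub', hOS, hDev => by
    obtain ⟨h1, h2⟩ := hOS
    obtain ⟨hd1, hd2⟩ := hDev
    have ih : ∀ j, payoff (sub' j) i ≤ payoff (sub j) i :=
      fun j => payoff_dev_le i (sub j) (sub' j) (h2 j) (hd2 j)
    show payoff (sub' ch') i ≤ payoff (sub ch) i
    by_cases hp : p = i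
    · subst hp
      exact le_trans (ih ch') (h1 ch')
    · rw [hd1 hp]
      exact ih ch

theorem stmt8 {n : ℕ} (t : GameTree n) (g : PureProfile t) :
    IsSPE g ↔ OneStage g := by
  induction t with
  | leaf u => cases g; exact Iff.rfl
  | node p k c ih =>
    cases g with
    | node ch sub =>
      constructor
      · rintro ⟨hsub, hdev⟩
        refine ⟨fun a => ?_, fun j => (ih j (sub j)).mp (hsub j)⟩
        exact hdev p (.node a sub) ⟨fun h => absurd rfl h, fun j => Dev_refl p (sub j)⟩
      · rintro ⟨h1, h2⟩
        refine ⟨fun j => (ih j (sub j)).mpr (h2 j), fun i g' hd => ?_⟩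
        exact payoff_dev_le i _ g' ⟨h1, h2⟩ hd
end
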